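/- Let k ≥ 1 be a natural number, let L be a list of unordered pairs of vertices of a finite vertex type V, let H = greedy(k, L), and let L₁ be the subsequence of L consisting of exactly those entries of L that are edges of H (taken in the order they appear in L). Then for every list L₂ of unordered pairs of vertices, every edge of H is an edge of greedy(k, L₁ ++ L₂); i.e., H is a subgraph of greedy(k, L₁ ++ L₂). -/

import Mathlib

/-- The greedy spanner construction: process the entries of `L` in order, starting from the
empty graph, adding an entry `{u,v}` as an edge iff the extended distance between `u` and `v`
in the graph built so far is at least `2k`. -/
noncomputable def greedy {V : Type*} (k : ℕ) (L : List (Sym2 V)) : SimpleGraph V :=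
  L.foldl (fun H e =>
    if (2 * k : ℕ∞) ≤ Sym2.lift ⟨H.edist, fun _ _ => H.edist_comm⟩ e
    then H ⊔ SimpleGraph.fromEdgeSet {e} else H) ⊥


/-- The subsequence of `L` consisting of exactly those entries that are edges of
`greedy k L`, in the order they appear in `L`. -/
noncomputable def greedyKept {V : Type*} (k : ℕ) (L : List (Sym2 V)) : List (Sym2 V) :=
  L.filter (fun e => @decide (e ∈ (greedy k L).edgeSet) (Classical.propDecidable _))

private noncomputable def gstep {V : Type*} (k : ℕ) (H : SimpleGraph V) (e : Sym2 V) :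
    SimpleGraph V :=
  if (2 * k : ℕ∞) ≤ Sym2.lift ⟨H.edist, fun _ _ => H.edist_comm⟩ e
  then H ⊔ SimpleGraph.fromEdgeSet {e} else H

private lemma le_gstep {V : Type*} (k : ℕ) (G : SimpleGraph V) (e : Sym2 V) :
    G ≤ gstep k G e := by
  unfold gstep
  split
  · exact le_sup_left
  · exact le_refl _

private lemma le_foldl {V : Type*} (k : ℕ) :
    ∀ (L : List (Sym2 V)) (G : SimpleGraph V), G ≤ L.foldl (gstep k) G := by
  intro L
  induction L with
  | nil => intro G; exact le_refl _
  | cons e L ih =>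
    intro G
    exact (le_gstep k G e).trans (ih (gstep k G e))

private lemma foldl_filter {V : Type*} (k : ℕ) (hk : 1 ≤ k) (p : Sym2 V → Bool) :
    ∀ (L : List (Sym2 V)) (G : SimpleGraph V),
      (∀ e ∈ (L.foldl (gstep k) G).edgeSet, p e = true) →
      (L.filter p).foldl (gstep k) G = L.foldl (gstep k) G := by
  intro L
  induction L with
  | nil => intro G _; rfl
  | cons e L ih =>
    intro G hp
    simp only [List.foldl_cons] at hp ⊢
    by_cases hcond : (2 * k : ℕ∞) ≤ Sym2.lift ⟨G.edist, fun _ _ => G.edist_comm⟩ e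
    · -- e is accepted, hence is an edge of the final graph, hence kept by the filter
      have hdiag : ¬ e.IsDiag := by
        induction e using Sym2.ind with
        | _ u v =>
          intro hd
          rw [Sym2.mk_isDiag_iff] at hd
          subst hd
          simp only [Sym2.lift_mk, SimpleGraph.edist_self] at hcond
          have : (2 * k : ℕ∞) = 0 := le_antisymm hcond zero_le
          have : 2 * k = 0 := by exact_mod_cast this
          omega
      have hstep : gstep k G e = G ⊔ SimpleGraph.fromEdgeSet {e} := if_pos hcond
      have hmem : e ∈ (L.foldl (gstep k) (gstep k G e)).edgeSet := by
        apply SimpleGraph.edgeSet_mono (le_foldl k L (gstep k G e))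
        rw [hstep]
        rw [SimpleGraph.edgeSet_sup]
        right
        rw [SimpleGraph.edgeSet_fromEdgeSet]
        exact ⟨rfl, hdiag⟩
      have hpe : p e = true := hp e hmem
      rw [List.filter_cons_of_pos hpe, List.foldl_cons]
      exact ih (gstep k G e) hp
    · -- e is rejected: processing it (if kept) leaves the graph unchanged
      have hstep : gstep k G e = G := if_neg hcond
      rw [hstep] at hp ⊢
      by_cases hpe : p e = true
      · rw [List.filter_cons_of_pos hpe, List.foldl_cons, hstep]
        exact ih G hp
      · rw [List.filter_cons_of_neg hpe]
        exact ih G hp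

private lemma greedy_eq_foldl {V : Type*} (k : ℕ) (L : List (Sym2 V)) :
    greedy k L = L.foldl (gstep k) ⊥ := rfl

/-- for any list `L₂`, every edge of `greedy k L` is an edge of
`greedy k (L₁ ++ L₂)`, where `L₁` is the subsequence of entries kept by `greedy k L`. -/
theorem greedy_kept_append {V : Type*} (k : ℕ) (hk : 1 ≤ k) (L L₂ : List (Sym2 V)) :
    greedy k L ≤ greedy k (greedyKept k L ++ L₂) := by
  have h1 : greedy k (greedyKept k L) = greedy k L := by
    rw [greedy_eq_foldl, greedy_eq_foldl, greedyKept]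
    exact foldl_filter k hk _ L ⊥ (fun e he => @decide_eq_true _ (Classical.propDecidable _) he)
  calc greedy k L = greedy k (greedyKept k L) := h1.symm
    _ ≤ greedy k (greedyKept k L ++ L₂) := by
        rw [greedy_eq_foldl, greedy_eq_foldl, List.foldl_append]
        exact le_foldl k L₂ _
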